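/- For any A ∈ 𝒜, M̄(A) = (1 − p^{k−h(A)}) · d^k · q^{|A|} · p^{h(A)} / (1 − pd). In particular, under the parametrization q = (1−pd)/d^k + s/d^{2k} with pd < 1 and s fixed: d^k·(M̄({o}) − 1) → s/(1−pd) as k → ∞, and for A ∈ 𝒜 with |A| = 2, d^k·M̄(A) → (1−pd)·p^{h(A)} as k → ∞. -/

import Mathlib

open MeasureTheory ProbabilityTheory Filter

/-- Vertices of the tree `T_{d,k}`: finite sequences over `[d]`. The root is `[]`. -/
abbrev Vert (d : ℕ) := List (Fin d)

/-- A percolation configuration: a Boolean (open/closed) for every pair `(v, s)`;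
the pair `(v, s)` represents the oriented edge from `v` to `v ++ s`.  Only pairs
with `s.length = 1` (short edges) or `s.length = k` (long edges) are actual edges. -/
abbrev Config (d : ℕ) := (Vert d × List (Fin d)) → Bool

/-- One open oriented edge step from `v` to `w`. -/
def step (d k : ℕ) (ω : Config d) (v w : Vert d) : Prop :=
  ∃ s : List (Fin d), (s.length = 1 ∨ s.length = k) ∧ w = v ++ s ∧ ω (v, s) = true

/-- The cluster of a set `B` of vertices: all vertices reachable from `B`
by an oriented path of open edges (with the convention `B ⊆ cluster`). -/
def cluster (d k : ℕ) (ω : Config d) (B : Set (Vert d)) : Set (Vert d) :=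
  {w | ∃ v ∈ B, Relation.ReflTransGen (step d k ω) v w}

/-- `μ` is the law of Bernoulli bond percolation on `T_{d,k}` in which,
independently, every short edge is open with probability `p` and every
long edge is open with probability `q`. -/
def IsPercolation (d k : ℕ) (p q : ℝ) (μ : Measure (Config d)) : Prop :=
  IsProbabilityMeasure μ ∧
  iIndepFun (fun e (ω : Config d) => ω e) μ ∧
  (∀ v : Vert d, ∀ s : List (Fin d), s.length = 1 →
      (μ {ω | ω (v, s) = true}).toReal = p) ∧
  (∀ v : Vert d, ∀ s : List (Fin d), s.length = k →
      (μ {ω | ω (v, s) = true}).toReal = q)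


/-- One open *short* edge step from `v` to `w`. -/
def shortStep (d : ℕ) (ω : Config d) (v w : Vert d) : Prop :=
  ∃ s : List (Fin d), s.length = 1 ∧ w = v ++ s ∧ ω (v, s) = true

/-- `C_s^B`: the short cluster of `B`, i.e. all vertices reachable from `B` by oriented
open paths using only short edges (with `B ⊆ C_s^B`). -/
def shortCluster (d : ℕ) (ω : Config d) (B : Set (Vert d)) : Set (Vert d) :=
  {w | ∃ v ∈ B, Relation.ReflTransGen (shortStep d ω) v w}

/-- `C_ℓ^B`: the vertices outside `C_s^B` which are endpoints of open long edges
starting in `C_s^B`. -/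
def longCluster (d k : ℕ) (ω : Config d) (B : Set (Vert d)) : Set (Vert d) :=
  {w | w ∉ shortCluster d ω B ∧ ∃ v ∈ shortCluster d ω B,
    ∃ s : List (Fin d), s.length = k ∧ w = v ++ s ∧ ω (v, s) = true}

/-- `V^v`: the full subtree rooted at `v`. -/
def subtree {d : ℕ} (v : Vert d) : Set (Vert d) := {w | ∃ s : List (Fin d), w = v ++ s}

/-- `V_Γ^v`: the subtree of height `k - 1` rooted at `v`. -/
def gammaSet (d k : ℕ) (v : Vert d) : Set (Vert d) :=
  {w | ∃ s : List (Fin d), s.length < k ∧ w = v ++ s}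

/-- A set `B` of vertices is admissible if `B ⊆ V_Γ^u` for some (necessarily unique)
`u ∈ B`, called the base of `B`. -/
def Admissible (d k : ℕ) (B : Set (Vert d)) : Prop :=
  ∃ u ∈ B, B ⊆ gammaSet d k u

/-- The base `b(B)` of an admissible set `B`. -/
noncomputable def base (d k : ℕ) (B : Set (Vert d)) : Vert d :=
  haveI := Classical.dec (Admissible d k B)
  if h : Admissible d k B then h.choose else []

/-- The relation on `C_ℓ^B`: `u` and `v` are related iff there is `w ∈ C_ℓ^B` with
`u, v ∈ V^w` (for admissible `B` this is an equivalence relation on `C_ℓ^B`). -/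
def longRel (d k : ℕ) (ω : Config d) (B : Set (Vert d)) (u v : Vert d) : Prop :=
  u ∈ longCluster d k ω B ∧ v ∈ longCluster d k ω B ∧
    ∃ w ∈ longCluster d k ω B, u ∈ subtree w ∧ v ∈ subtree w

/-- `ℬ^B`: the collection of equivalence classes of `C_ℓ^B` under `longRel`. -/
def longClasses (d k : ℕ) (ω : Config d) (B : Set (Vert d)) : Set (Set (Vert d)) :=
  {S | ∃ u ∈ longCluster d k ω B, S = {v | longRel d k ω B u v}}

/-- The type `t(B)` of an admissible set `B`: the set of words that must be concatenated
with the base of `B` to produce `B`. -/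
noncomputable def typeOf (d k : ℕ) (B : Set (Vert d)) : Set (Vert d) :=
  {v | v ∈ gammaSet d k ([] : Vert d) ∧ base d k B ++ v ∈ B}

/-- `𝒜`: the set of types, i.e. admissible sets based at the root. -/
def typeSpace (d k : ℕ) : Set (Set (Vert d)) :=
  {A | ([] : Vert d) ∈ A ∧ A ⊆ gammaSet d k ([] : Vert d)}

open scoped ENNReal
open MeasureTheory in
/-- The mean offspring matrix of the exploration branching process:
`M(A, A') = E[#{B' ∈ ℬ^B : t(B') = A'}]` for `B` an admissible set of type `A`
(we take the canonical representative `B = A`, which is admissible with base the root). -/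
noncomputable def meanOffspring (d k : ℕ) (μ : Measure (Config d))
    (A A' : Set (Vert d)) : ℝ≥0∞ :=
  ∫⁻ ω, ({B' | B' ∈ longClasses d k ω A ∧ typeOf d k B' = A'}.encard : ℕ∞) ∂μ

open MeasureTheory in
/-- `M̄(A)`: the expected number of vertices `v ∈ C_ℓ^{{o}}` such that
`C_ℓ^{{o}} ∩ V^v ⊇ {v·u : u ∈ A}`. -/
noncomputable def meanUpper (d k : ℕ) (μ : Measure (Config d))
    (A : Set (Vert d)) : ℝ≥0∞ :=
  ∫⁻ ω, ({v | v ∈ longCluster d k ω {([] : Vert d)} ∧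
      ∀ u ∈ A, v ++ u ∈ longCluster d k ω {([] : Vert d)}}.encard : ℕ∞) ∂μ

/-- The height `h(A) = sup_{v ∈ A} h(v)` of a set of vertices. -/
noncomputable def heightSet {d : ℕ} (A : Set (Vert d)) : ℕ :=
  sSup (List.length '' A)

/-- The parametrization `q = (1-pd)/d^k + s/d^{2k}` of Section 3.3. -/
noncomputable def qparam (d : ℕ) (p s : ℝ) (k : ℕ) : ℝ :=
  (1 - p * d) / (d : ℝ) ^ k + s / (d : ℝ) ^ (2 * k)

section
namespace PercAux
open Set

variable {d : ℕ}

/-- All short edges along `v` (from the root) are open. -/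
def sAll (ω : Config d) (v : Vert d) : Prop :=
  ∀ i < v.length, ω (v.take i, (v.drop i).take 1) = true

lemma sAll_append_left {ω : Config d} {v u : Vert d} (h : sAll ω (v ++ u)) : sAll ω v := by
  intro i hi
  have h1 : (v ++ u).take i = v.take i := List.take_append_of_le_length (le_of_lt hi)
  have h2 : (v ++ u).drop i = v.drop i ++ u := List.drop_append_of_le_length (le_of_lt hi)
  have h3 : (v.drop i ++ u).take 1 = (v.drop i).take 1 :=
    List.take_append_of_le_length (by simp; omega)
  have := h i (by simp; omega)
  rwa [h1, h2, h3] at this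

lemma sAll_take {ω : Config d} {v : Vert d} (h : sAll ω v) (j : ℕ) : sAll ω (v.take j) := by
  have := List.take_append_drop j v
  exact sAll_append_left (u := v.drop j) (by rwa [this])

lemma sAll_append_one {ω : Config d} {w s : Vert d} (hs : s.length = 1)
    (h : sAll ω w) (he : ω (w, s) = true) : sAll ω (w ++ s) := by
  intro i hi
  rw [List.length_append, hs] at hi
  rcases lt_or_eq_of_le (Nat.lt_succ_iff.mp hi) with hlt | heq
  · have h1 : (w ++ s).take i = w.take i := List.take_append_of_le_length (le_of_lt hlt)
    have h2 : (w ++ s).drop i = w.drop i ++ s := List.drop_append_of_le_length (le_of_lt hlt)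
    have h3 : (w.drop i ++ s).take 1 = (w.drop i).take 1 :=
      List.take_append_of_le_length (by simp; omega)
    rw [h1, h2, h3]; exact h i hlt
  · subst heq
    have h1 : (w ++ s).take w.length = w := List.take_left' rfl
    have h2 : (w ++ s).drop w.length = s := List.drop_left' rfl
    have h3 : s.take 1 = s := List.take_of_length_le (by omega)
    rw [h1, h2, h3]; exact he

lemma mem_shortCluster_iff {ω : Config d} {v : Vert d} :
    v ∈ shortCluster d ω {([] : Vert d)} ↔ sAll ω v := by
  constructor
  · rintro ⟨r, hr, hrel⟩
    rcases hr with rfl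
    induction hrel with
    | refl => intro i hi; simp at hi
    | tail _ hstep ih =>
      obtain ⟨s, hs1, rfl, hse⟩ := hstep
      exact sAll_append_one hs1 ih hse
  · intro h
    refine ⟨[], rfl, ?_⟩
    induction v using List.reverseRecOn with
    | nil => exact Relation.ReflTransGen.refl
    | append_singleton w a ih =>
      have hw : sAll ω w := sAll_append_left h
      have he : ω (w, [a]) = true := by
        have := h w.length (by simp)
        have h1 : (w ++ [a]).take w.length = w := List.take_left' rfl
        have h2 : (w ++ [a]).drop w.length = [a] := List.drop_left' rfl
        rwa [h1, h2] at this
      exact Relation.ReflTransGen.tail (ih hw) ⟨[a], rfl, rfl, he⟩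

lemma mem_longCluster_iff {k : ℕ} {ω : Config d} {v : Vert d} :
    v ∈ longCluster d k ω {([] : Vert d)} ↔
      k ≤ v.length ∧ sAll ω (v.take (v.length - k)) ∧ ¬ sAll ω v ∧
        ω (v.take (v.length - k), v.drop (v.length - k)) = true := by
  constructor
  · rintro ⟨hns, w, hw, s, hs, rfl, he⟩
    have hlen : (w ++ s).length = w.length + k := by simp [hs]
    have hwk : (w ++ s).length - k = w.length := by omega
    have h1 : (w ++ s).take ((w ++ s).length - k) = w := by rw [hwk]; exact List.take_left' rfl
    have h2 : (w ++ s).drop ((w ++ s).length - k) = s := by rw [hwk]; exact List.drop_left' rfl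
    refine ⟨by omega, ?_, ?_, ?_⟩
    · rw [h1]; exact mem_shortCluster_iff.mp hw
    · intro hall; exact hns (mem_shortCluster_iff.mpr hall)
    · rw [h1, h2]; exact he
  · rintro ⟨hk, hsub, hnall, he⟩
    refine ⟨fun hmem => hnall (mem_shortCluster_iff.mp hmem),
      v.take (v.length - k), mem_shortCluster_iff.mpr hsub,
      v.drop (v.length - k), by simp; omega, (List.take_append_drop _ v).symm, he⟩

end PercAux
end

section
namespace PercAux
open Set MeasureTheory ProbabilityTheory

variable {d : ℕ}

/-- The event whose expected count is `meanUpper`. -/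
def Ev (d k : ℕ) (A : Set (Vert d)) (v : Vert d) : Set (Config d) :=
  {ω | v ∈ longCluster d k ω {([] : Vert d)} ∧
      ∀ u ∈ A, v ++ u ∈ longCluster d k ω {([] : Vert d)}}

lemma sAll_take_iff {ω : Config d} {v : Vert d} {j : ℕ} (hj : j ≤ v.length) :
    sAll ω (v.take j) ↔ ∀ i < j, ω (v.take i, (v.drop i).take 1) = true := by
  have hlen : (v.take j).length = j := by simp [hj]
  have key : ∀ i < j, (v.take j).take i = v.take i ∧
      ((v.take j).drop i).take 1 = (v.drop i).take 1 := by
    intro i hi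
    constructor
    · rw [List.take_take]; congr 1; omega
    · rw [List.drop_take, List.take_take]; congr 1; omega
  constructor
  · intro hs i hi
    have := hs i (by omega)
    rwa [(key i hi).1, (key i hi).2] at this
  · intro hs i hi
    rw [hlen] at hi
    rw [(key i hi).1, (key i hi).2]
    exact hs i hi

lemma Ev_empty {k : ℕ} {A : Set (Vert d)} {v : Vert d} (hv : v.length < k) :
    Ev d k A v = ∅ := by
  rw [Set.eq_empty_iff_forall_notMem]
  rintro ω ⟨hvC, -⟩
  exact absurd (mem_longCluster_iff.mp hvC).1 (by omega)

lemma typeSpace_facts {k : ℕ} {A : Set (Vert d)} (hA : A ∈ typeSpace d k) :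
    A.Finite ∧ (∀ u ∈ A, u.length ≤ heightSet A) ∧
      (∃ u ∈ A, u.length = heightSet A) ∧ heightSet A < k := by
  obtain ⟨hA0, hsub⟩ := hA
  have hlen : ∀ u ∈ A, u.length < k := by
    intro u hu
    obtain ⟨s, hs, rfl⟩ := hsub hu
    simpa using hs
  have hfin : A.Finite := (List.finite_length_lt (Fin d) k).subset fun u hu => hlen u hu
  have hbdd : BddAbove (List.length '' A) := ⟨k, by rintro x ⟨u, hu, rfl⟩; exact (hlen u hu).le⟩
  have hne : (List.length '' A).Nonempty := ⟨0, [], hA0, rfl⟩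
  obtain ⟨u₀, hu₀, hlen₀⟩ := Nat.sSup_mem hne hbdd
  exact ⟨hfin, fun u hu => le_csSup hbdd ⟨u, hu, rfl⟩, ⟨u₀, hu₀, hlen₀⟩,
    by rw [heightSet, ← hlen₀]; exact hlen u₀ hu₀⟩

lemma Ev_eq {k : ℕ} {A : Set (Vert d)} {h : ℕ} (hA0 : ([] : Vert d) ∈ A)
    (hub : ∀ u ∈ A, u.length ≤ h) (hat : ∃ u ∈ A, u.length = h) (hhk : h < k)
    {v : Vert d} (hv : k ≤ v.length) :
    Ev d k A v =
      {ω | (∀ i < v.length - k + h, ω (v.take i, (v.drop i).take 1) = true) ∧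
        (∀ u ∈ A, ω (v.take (v.length - k + u.length),
            v.drop (v.length - k + u.length) ++ u) = true) ∧
        ¬ ∀ j, v.length - k + h ≤ j → j < v.length →
            ω (v.take j, (v.drop j).take 1) = true} := by
  set n := v.length with hn
  set m := v.length - k with hm
  have hmn : m + k = n := by omega
  have t0 : ∀ u : Vert d, u.length ≤ h → (v ++ u).length - k = m + u.length := by
    intro u hu; simp only [List.length_append]; omega
  have t1 : ∀ u : Vert d, u.length ≤ h → (v ++ u).take (m + u.length) = v.take (m + u.length) :=
    fun u hu => List.take_append_of_le_length (by omega)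
  have t2 : ∀ u : Vert d, u.length ≤ h →
      (v ++ u).drop (m + u.length) = v.drop (m + u.length) ++ u :=
    fun u hu => List.drop_append_of_le_length (by omega)
  ext ω
  simp only [Ev, Set.mem_setOf_eq]
  constructor
  · rintro ⟨hvC, huC⟩
    obtain ⟨u₀, hu₀A, hu₀len⟩ := hat
    have H0 := mem_longCluster_iff.mp (huC u₀ hu₀A)
    have hsmh : sAll ω (v.take (m + h)) := by
      have := H0.2.1
      rwa [t0 u₀ hu₀len.le, t1 u₀ hu₀len.le, hu₀len] at this
    refine ⟨(sAll_take_iff (by omega)).mp hsmh, ?_, ?_⟩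
    · intro u hu
      have := (mem_longCluster_iff.mp (huC u hu)).2.2.2
      rwa [t0 u (hub u hu), t1 u (hub u hu), t2 u (hub u hu)] at this
    · intro hall
      apply (mem_longCluster_iff.mp hvC).2.2.1
      intro i hi
      by_cases hic : i < m + h
      · exact (sAll_take_iff (j := m + h) (by omega)).mp hsmh i hic
      · exact hall i (by omega) hi
  · rintro ⟨h1, h2, h3⟩
    have hnall : ¬ sAll ω v := fun hs => h3 fun j _ hj2 => hs j hj2
    have hsmh : sAll ω (v.take (m + h)) := (sAll_take_iff (by omega)).mpr h1
    have hsm : ∀ j, j ≤ m + h → sAll ω (v.take j) := by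
      intro j hj
      have := sAll_take hsmh j
      rwa [List.take_take, min_eq_left hj] at this
    refine ⟨mem_longCluster_iff.mpr ⟨by omega, hsm m (by omega), hnall, ?_⟩, ?_⟩
    · have := h2 [] hA0
      simpa using this
    · intro u hu
      refine mem_longCluster_iff.mpr ⟨by simp only [List.length_append]; omega, ?_, ?_, ?_⟩
      · rw [t0 u (hub u hu), t1 u (hub u hu)]
        exact hsm _ (by have := hub u hu; omega)
      · intro hs; exact hnall (sAll_append_left hs)
      · rw [t0 u (hub u hu), t1 u (hub u hu), t2 u (hub u hu)]
        exact h2 u hu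

end PercAux
end

section
namespace PercAux
open Set MeasureTheory ProbabilityTheory

variable {d : ℕ}

/-- The event that the edge `e` is open. -/
def T (d : ℕ) (e : Vert d × List (Fin d)) : Set (Config d) := {ω | ω e = true}

lemma measurableSet_T (e : Vert d × List (Fin d)) : MeasurableSet (T d e) := by
  have : T d e = (fun ω : Config d => ω e) ⁻¹' {true} := rfl
  rw [this]
  exact measurable_pi_apply e (measurableSet_singleton true)

lemma measurableSet_biInter_T (S : Finset (Vert d × List (Fin d))) :
    MeasurableSet (⋂ e ∈ S, T d e) :=
  MeasurableSet.biInter S.countable_toSet fun e _ => measurableSet_T e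

lemma meas_biInter_T {k : ℕ} {p q' : ℝ} {ν : Measure (Config d)}
    (hperc : IsPercolation d k p q' ν) (S : Finset (Vert d × List (Fin d))) :
    ν (⋂ e ∈ S, T d e) = ∏ e ∈ S, ν (T d e) :=
  hperc.2.1.measure_inter_preimage_eq_mul S
    (sets := fun _ => ({true} : Set Bool)) (fun _ _ => measurableSet_singleton true)

lemma biInter_T_image {γ : Type*} [DecidableEq γ] (S : Finset γ)
    (f : γ → Vert d × List (Fin d)) :
    (⋂ e ∈ S.image f, T d e) = ⋂ i ∈ S, T d (f i) := by
  ext ω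
  simp only [Set.mem_iInter, Finset.mem_image]
  constructor
  · exact fun H i hi => H (f i) ⟨i, hi, rfl⟩
  · rintro H e ⟨i, hi, rfl⟩
    exact H i hi

lemma meas_Ev {k : ℕ} (hk2 : 2 ≤ k) {p q' : ℝ} {ν : Measure (Config d)}
    (hperc : IsPercolation d k p q' ν) {A : Set (Vert d)} (hA : A ∈ typeSpace d k)
    {v : Vert d} (hv : k ≤ v.length) :
    ν (Ev d k A v) = ENNReal.ofReal p ^ (v.length - k + heightSet A) *
      ENNReal.ofReal q' ^ A.ncard * (1 - ENNReal.ofReal p ^ (k - heightSet A)) := by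
  classical
  haveI : IsProbabilityMeasure ν := hperc.1
  obtain ⟨hfin, hub, hat, hhk⟩ := typeSpace_facts hA
  set h := heightSet A with hh
  set n := v.length with hn
  set m := v.length - k with hm
  have hmn : m + k = n := by omega
  have hmhn : m + h < n := by omega
  -- coordinates
  set sc : ℕ → Vert d × List (Fin d) := fun i => (v.take i, (v.drop i).take 1) with hsc
  set lc : Vert d → Vert d × List (Fin d) :=
    fun u => (v.take (m + u.length), v.drop (m + u.length) ++ u) with hlc
  set F : Finset (Vert d × List (Fin d)) :=
    ((Finset.range (m + h)).image sc) ∪ hfin.toFinset.image lc with hF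
  set G : Finset (Vert d × List (Fin d)) := (Finset.Ico (m + h) n).image sc with hG
  -- the event as a set difference
  have hFsplit : (⋂ e ∈ F, T d e) =
      (⋂ i ∈ Finset.range (m + h), T d (sc i)) ∩ ⋂ u ∈ hfin.toFinset, T d (lc u) := by
    rw [hF, Finset.set_biInter_inter, biInter_T_image, biInter_T_image]
  have hGsplit : (⋂ e ∈ G, T d e) = ⋂ j ∈ Finset.Ico (m + h) n, T d (sc j) := by
    rw [hG, biInter_T_image]
  have hEv : Ev d k A v = (⋂ e ∈ F, T d e) \ (⋂ e ∈ G, T d e) := by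
    rw [hFsplit, hGsplit, Ev_eq hA.1 hub hat hhk hv]
    ext ω
    simp only [Set.mem_diff, Set.mem_inter_iff, Set.mem_iInter, Finset.mem_range,
      Finset.mem_Ico, Set.Finite.mem_toFinset, T, Set.mem_setOf_eq]
    constructor
    · rintro ⟨h1, h2, h3⟩
      exact ⟨⟨h1, h2⟩, fun hall => h3 fun j hj1 hj2 => hall j ⟨hj1, hj2⟩⟩
    · rintro ⟨⟨h1, h2⟩, h3⟩
      exact ⟨h1, h2, fun hall => h3 fun j hj => hall j hj.1 hj.2⟩
  -- injectivity facts
  have hsc_len : ∀ i, i ≤ n → (sc i).1.length = i := by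
    intro i hi
    simp only [hsc, List.length_take]
    omega
  have hsc_inj : ∀ i ≤ n, ∀ j ≤ n, sc i = sc j → i = j := by
    intro i hi j hj e
    have := congrArg (fun x => x.1.length) e
    simpa [hsc_len i hi, hsc_len j hj] using this
  have hsc2 : ∀ i, i < n → ((sc i).2).length = 1 := by
    intro i hi
    simp only [hsc]
    rw [List.length_take, List.length_drop]
    omega
  have hlc1 : ∀ u ∈ A, (lc u).1.length = m + u.length := by
    intro u hu
    simp only [hlc]
    rw [List.length_take]
    have := hub u hu; omega
  have hlc2 : ∀ u ∈ A, ((lc u).2).length = k := by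
    intro u hu
    simp only [hlc]
    rw [List.length_append, List.length_drop]
    have := hub u hu; omega
  have hlc_inj : ∀ u₁ ∈ A, ∀ u₂ ∈ A, lc u₁ = lc u₂ → u₁ = u₂ := by
    intro u₁ h₁ u₂ h₂ e
    have e1 : m + u₁.length = m + u₂.length := by
      have := congrArg (fun x => x.1.length) e
      simpa [hlc1 u₁ h₁, hlc1 u₂ h₂] using this
    have e2 := congrArg (fun x => x.2) e
    simp only [hlc] at e2
    rw [show u₁.length = u₂.length by omega] at e2
    exact List.append_cancel_left e2
  -- probabilities of individual coordinates
  have hTshort : ∀ i, i < n → ν (T d (sc i)) = ENNReal.ofReal p := by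
    intro i hi
    have htr := hperc.2.2.1 (v.take i) ((v.drop i).take 1) (hsc2 i hi)
    rw [show T d (sc i) = {ω : Config d | ω (v.take i, (v.drop i).take 1) = true} from rfl,
      ← htr, ENNReal.ofReal_toReal (measure_ne_top _ _)]
  have hTlong : ∀ u ∈ A, ν (T d (lc u)) = ENNReal.ofReal q' := by
    intro u hu
    have htr := hperc.2.2.2 (lc u).1 (lc u).2 (hlc2 u hu)
    rw [show T d (lc u) = {ω : Config d | ω ((lc u).1, (lc u).2) = true} from rfl,
      ← htr, ENNReal.ofReal_toReal (measure_ne_top _ _)]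
  -- disjointness
  have hdisjFG : Disjoint F G := by
    rw [Finset.disjoint_left]
    rintro e he hg
    rw [hG, Finset.mem_image] at hg
    obtain ⟨j, hj, hje⟩ := hg
    rw [Finset.mem_Ico] at hj
    rw [hF, Finset.mem_union, Finset.mem_image, Finset.mem_image] at he
    rcases he with ⟨i, hi, hie⟩ | ⟨u, hu, hue⟩
    · rw [Finset.mem_range] at hi
      have := hsc_inj j (by omega) i (by omega) (by rw [hje, hie])
      omega
    · rw [Set.Finite.mem_toFinset] at hu
      have := congrArg (fun x => x.2.length) (hue.trans hje.symm)
      rw [hsc2 j (by omega), hlc2 u hu] at this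
      omega
  have hdisj1 : Disjoint ((Finset.range (m + h)).image sc) (hfin.toFinset.image lc) := by
    rw [Finset.disjoint_left]
    rintro e he hg
    rw [Finset.mem_image] at he hg
    obtain ⟨i, hi, hie⟩ := he
    obtain ⟨u, hu, hue⟩ := hg
    rw [Finset.mem_range] at hi
    rw [Set.Finite.mem_toFinset] at hu
    have := congrArg (fun x => x.2.length) (hie.trans hue.symm)
    rw [hsc2 i (by omega), hlc2 u hu] at this
    omega
  -- products
  have hprodF : ∏ e ∈ F, ν (T d e)
      = ENNReal.ofReal p ^ (m + h) * ENNReal.ofReal q' ^ A.ncard := by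
    rw [hF, Finset.prod_union hdisj1,
      Finset.prod_image (fun i hi j hj e =>
        hsc_inj i (by rw [Finset.mem_coe, Finset.mem_range] at hi; omega) j
          (by rw [Finset.mem_coe, Finset.mem_range] at hj; omega) e),
      Finset.prod_image (fun u₁ h₁ u₂ h₂ e =>
        hlc_inj u₁ (hfin.mem_toFinset.mp h₁) u₂ (hfin.mem_toFinset.mp h₂) e)]
    congr 1
    · rw [Finset.prod_congr rfl (fun i hi => hTshort i
        (by rw [Finset.mem_range] at hi; omega)), Finset.prod_const, Finset.card_range]
    · rw [Finset.prod_congr rfl (fun u hu => hTlong u (hfin.mem_toFinset.mp hu)),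
        Finset.prod_const, ← Set.ncard_eq_toFinset_card A hfin]
  have hprodG : ∏ e ∈ G, ν (T d e) = ENNReal.ofReal p ^ (k - h) := by
    rw [hG, Finset.prod_image (fun i hi j hj e =>
      hsc_inj i (by rw [Finset.mem_coe, Finset.mem_Ico] at hi; omega) j
        (by rw [Finset.mem_coe, Finset.mem_Ico] at hj; omega) e)]
    rw [Finset.prod_congr rfl (fun i hi => hTshort i (by rw [Finset.mem_Ico] at hi; omega)),
      Finset.prod_const, Nat.card_Ico]
    congr 1
    omega
  -- assemble
  have hsub : ν ((⋂ e ∈ F, T d e) \ (⋂ e ∈ G, T d e))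
      = ν (⋂ e ∈ F, T d e) - ν ((⋂ e ∈ F, T d e) ∩ ⋂ e ∈ G, T d e) := by
    refine ENNReal.eq_sub_of_add_eq (measure_ne_top _ _) ?_
    rw [add_comm]
    exact measure_inter_add_diff _ (measurableSet_biInter_T G)
  have hinter : ((⋂ e ∈ F, T d e) ∩ ⋂ e ∈ G, T d e) = ⋂ e ∈ F ∪ G, T d e :=
    (Finset.set_biInter_inter F G (T d)).symm
  rw [hEv, hsub, hinter, meas_biInter_T hperc, meas_biInter_T hperc,
    Finset.prod_union hdisjFG, hprodF, hprodG]
  rw [ENNReal.mul_sub (fun _ _ => ENNReal.mul_ne_top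
    (ENNReal.pow_ne_top ENNReal.ofReal_ne_top) (ENNReal.pow_ne_top ENNReal.ofReal_ne_top)),
    mul_one]

end PercAux
end

section
namespace PercAux
open Set MeasureTheory ProbabilityTheory

variable {d : ℕ}

lemma measurableSet_forall_T {γ : Type*} [Countable γ] (P : γ → Prop)
    (f : γ → Vert d × List (Fin d)) :
    MeasurableSet {ω : Config d | ∀ i, P i → ω (f i) = true} := by
  have : {ω : Config d | ∀ i, P i → ω (f i) = true} = ⋂ i, ⋂ _ : P i, T d (f i) := by
    ext ω; simp [T]
  rw [this]
  exact MeasurableSet.iInter fun i => MeasurableSet.iInter fun _ => measurableSet_T _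

lemma measurableSet_forall2_T {γ : Type*} [Countable γ] (P Q : γ → Prop)
    (f : γ → Vert d × List (Fin d)) :
    MeasurableSet {ω : Config d | ∀ i, P i → Q i → ω (f i) = true} := by
  have : {ω : Config d | ∀ i, P i → Q i → ω (f i) = true}
      = {ω : Config d | ∀ i, (P i ∧ Q i) → ω (f i) = true} := by
    ext ω; simp only [Set.mem_setOf_eq, and_imp]
  rw [this]
  exact measurableSet_forall_T _ _

lemma measurableSet_Ev {k : ℕ} {A : Set (Vert d)} (hA : A ∈ typeSpace d k) (v : Vert d) :
    MeasurableSet (Ev d k A v) := by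
  obtain ⟨hfin, hub, hat, hhk⟩ := typeSpace_facts hA
  rcases lt_or_ge v.length k with hv | hv
  · rw [Ev_empty hv]; exact MeasurableSet.empty
  · rw [Ev_eq hA.1 hub hat hhk hv]
    simp only [Set.setOf_and]
    refine (measurableSet_forall_T _ _).inter ((measurableSet_forall_T _ _).inter ?_)
    exact (measurableSet_forall2_T (fun j => v.length - k + heightSet A ≤ j)
      (fun j => j < v.length) (fun j => (v.take j, (v.drop j).take 1))).compl

lemma meanUpper_eq_tsum {k : ℕ} {ν : Measure (Config d)}
    {A : Set (Vert d)} (hA : A ∈ typeSpace d k) :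
    meanUpper d k ν A = ∑' v : Vert d, ν (Ev d k A v) := by
  have key : ∀ ω : Config d,
      (({v | v ∈ longCluster d k ω {([] : Vert d)} ∧
        ∀ u ∈ A, v ++ u ∈ longCluster d k ω {([] : Vert d)}}.encard : ℕ∞) : ℝ≥0∞)
      = ∑' v : Vert d, (Ev d k A v).indicator (fun _ => (1 : ℝ≥0∞)) ω := by
    intro ω
    rw [← ENNReal.tsum_set_one]
    refine (tsum_subtype _ (fun _ => (1 : ℝ≥0∞))).trans ?_
    apply tsum_congr
    intro v
    classical
    rw [Set.indicator_apply, Set.indicator_apply]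
    exact if_congr Iff.rfl rfl rfl
  unfold meanUpper
  rw [lintegral_congr key, lintegral_tsum
    (fun v => ((measurable_const.indicator (measurableSet_Ev hA v)).aemeasurable))]
  exact tsum_congr fun v => lintegral_indicator_one (measurableSet_Ev hA v)

lemma tsum_vert (g : ℕ → ℝ≥0∞) :
    ∑' v : Vert d, g v.length = ∑' n : ℕ, (d : ℝ≥0∞) ^ n * g n := by
  rw [← (Equiv.sigmaFiberEquiv (List.length : Vert d → ℕ)).tsum_eq
    (fun v : Vert d => g v.length), ENNReal.tsum_sigma']
  apply tsum_congr
  intro n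
  have hcongr : ∀ b : {v : Vert d // v.length = n},
      g (((Equiv.sigmaFiberEquiv (List.length : Vert d → ℕ))
        (⟨n, b⟩ : Σ n : ℕ, {v : Vert d // v.length = n})).length) = g n := by
    intro b
    have : ((Equiv.sigmaFiberEquiv (List.length : Vert d → ℕ))
        (⟨n, b⟩ : Σ n : ℕ, {v : Vert d // v.length = n})) = b.1 := rfl
    rw [this, b.2]
  rw [tsum_congr hcongr]
  haveI : Fintype {v : Vert d // v.length = n} :=
    inferInstanceAs (Fintype (List.Vector (Fin d) n))
  rw [tsum_fintype, Finset.sum_const, Finset.card_univ]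
  have hcard : Fintype.card {v : Vert d // v.length = n} = d ^ n := by
    rw [← Nat.card_eq_fintype_card]
    have h2 : Nat.card (List.Vector (Fin d) n) = d ^ n := by
      rw [Nat.card_eq_fintype_card, card_vector, Fintype.card_fin]
    exact h2
  rw [hcard, nsmul_eq_mul]
  push_cast
  ring

/-- The `ℝ≥0∞`-valued formula for `meanUpper`. -/
lemma meanUpper_eq_ennreal {k : ℕ} (hk2 : 2 ≤ k) {p q' : ℝ} {ν : Measure (Config d)}
    (hperc : IsPercolation d k p q' ν) {A : Set (Vert d)} (hA : A ∈ typeSpace d k) :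
    meanUpper d k ν A =
      (1 - ENNReal.ofReal p ^ (k - heightSet A)) *
        (ENNReal.ofReal p ^ heightSet A * ENNReal.ofReal q' ^ A.ncard) *
        ((d : ℝ≥0∞) ^ k * (1 - (d : ℝ≥0∞) * ENNReal.ofReal p)⁻¹) := by
  classical
  set P := ENNReal.ofReal p with hP
  set Q := ENNReal.ofReal q' with hQ
  set h := heightSet A with hh
  set C : ℝ≥0∞ := (1 - P ^ (k - h)) * (P ^ h * Q ^ A.ncard) with hC
  set g : ℕ → ℝ≥0∞ := fun n => if k ≤ n then P ^ (n - k + h) * Q ^ A.ncard *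
      (1 - P ^ (k - h)) else 0 with hg
  have hEv : ∀ v : Vert d, ν (Ev d k A v) = g v.length := by
    intro v
    rcases lt_or_ge v.length k with hv | hv
    · rw [Ev_empty hv, hg]
      simp [Nat.not_le.mpr hv]
    · rw [meas_Ev hk2 hperc hA hv, hg]
      simp [hv]
      rfl
  rw [meanUpper_eq_tsum hA, tsum_congr hEv, tsum_vert]
  have hsupp : Function.support (fun n => (d : ℝ≥0∞) ^ n * g n) ⊆
      Set.range (fun m : ℕ => m + k) := by
    intro n hn
    rcases lt_or_ge n k with hnk | hnk
    · exfalso; apply hn; rw [hg]; simp [Nat.not_le.mpr hnk]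
    · exact ⟨n - k, by show n - k + k = n; omega⟩
  rw [← Function.Injective.tsum_eq (add_left_injective k) hsupp]
  have hterm : ∀ m : ℕ, (d : ℝ≥0∞) ^ (m + k) * g (m + k)
      = (C * (d : ℝ≥0∞) ^ k) * ((d : ℝ≥0∞) * P) ^ m := by
    intro m
    rw [hg]
    simp only [le_add_iff_nonneg_left, Nat.zero_le, if_pos, Nat.add_sub_cancel]
    rw [hC, pow_add, pow_add, mul_pow]
    ring
  rw [tsum_congr hterm, ENNReal.tsum_mul_left, ENNReal.tsum_geometric]
  rw [hC]
  ring

end PercAux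
end

section
namespace PercAux
open Set MeasureTheory ProbabilityTheory

variable {d : ℕ}

lemma meanUpper_toReal {k : ℕ} (hk2 : 2 ≤ k) {p q' : ℝ}
    (hp0 : 0 ≤ p) (hp1 : p ≤ 1) (hq0 : 0 ≤ q') (hpd : p * d < 1)
    {ν : Measure (Config d)} (hperc : IsPercolation d k p q' ν)
    {A : Set (Vert d)} (hA : A ∈ typeSpace d k) :
    (meanUpper d k ν A).toReal =
      (1 - p ^ (k - heightSet A)) *
        ((d : ℝ) ^ k * q' ^ A.ncard * p ^ heightSet A) / (1 - p * d) := by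
  have hpd0 : 0 ≤ p * d := by positivity
  rw [meanUpper_eq_ennreal hk2 hperc hA]
  have e1 : (1 - ENNReal.ofReal p ^ (k - heightSet A))
      = ENNReal.ofReal (1 - p ^ (k - heightSet A)) := by
    rw [ENNReal.ofReal_sub _ (by positivity), ENNReal.ofReal_one, ENNReal.ofReal_pow hp0]
  have e2 : ((d : ℝ≥0∞) * ENNReal.ofReal p) = ENNReal.ofReal (p * d) := by
    rw [mul_comm, ← ENNReal.ofReal_natCast d, ← ENNReal.ofReal_mul hp0]
  have e3 : (1 - (d : ℝ≥0∞) * ENNReal.ofReal p) = ENNReal.ofReal (1 - p * d) := by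
    rw [e2, ENNReal.ofReal_sub _ hpd0, ENNReal.ofReal_one]
  rw [e1, e3]
  rw [ENNReal.toReal_mul, ENNReal.toReal_mul, ENNReal.toReal_mul, ENNReal.toReal_mul,
    ENNReal.toReal_inv, ENNReal.toReal_pow, ENNReal.toReal_pow, ENNReal.toReal_pow,
    ENNReal.toReal_ofReal (sub_nonneg.mpr (pow_le_one₀ hp0 hp1)),
    ENNReal.toReal_ofReal hp0, ENNReal.toReal_ofReal hq0,
    ENNReal.toReal_ofReal (by linarith : (0:ℝ) ≤ 1 - p * d),
    ENNReal.toReal_natCast]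
  rw [div_eq_mul_inv]
  ring

lemma heightSet_singleton_nil : heightSet ({([] : Vert d)} : Set (Vert d)) = 0 := by
  rw [heightSet, Set.image_singleton]
  exact csSup_singleton _

lemma typeSpace_singleton_nil {k : ℕ} (hk : 1 ≤ k) :
    ({([] : Vert d)} : Set (Vert d)) ∈ typeSpace d k := by
  refine ⟨rfl, ?_⟩
  rintro u rfl
  exact ⟨[], by simpa using (show 0 < k from hk), rfl⟩

lemma le_heightSet {A : Set (Vert d)} (hfin : A.Finite) {u : Vert d} (hu : u ∈ A) :
    u.length ≤ heightSet A :=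
  le_csSup (hfin.image List.length).bddAbove ⟨u, hu, rfl⟩

lemma mem_typeSpace_of_encard {A : Set (Vert d)} (h0 : ([] : Vert d) ∈ A)
    (hfin : A.Finite) {k : ℕ} (hk : heightSet A < k) : A ∈ typeSpace d k :=
  ⟨h0, fun u hu => ⟨u, lt_of_le_of_lt (le_heightSet hfin hu) hk, rfl⟩⟩

end PercAux
end

/-- **Lemma 3.9** (de Lima–Szabó–Valesin), formula for `M̄` and its consequences.
(i) For any `A ∈ 𝒜`, `M̄(A) = (1 - p^{k-h(A)})·d^k·q^{|A|}·p^{h(A)}/(1-pd)`.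
(ii) Under the parametrization `q = (1-pd)/d^k + s/d^{2k}`,
`d^k·(M̄({o}) - 1) → s/(1-pd)` as `k → ∞`, and
(iii) for `A` with `o ∈ A` and `|A| = 2`, `d^k·M̄(A) → (1-pd)·p^{h(A)}`. -/
theorem meanUpper_formula_and_limits (d : ℕ) (hd : 2 ≤ d)
    (p : ℝ) (hp0 : 0 ≤ p) (hpd : p * d < 1) (s : ℝ)
    (μ : ℕ → Measure (Config d))
    (hμ : ∀ k, 2 ≤ k → qparam d p s k ∈ Set.Icc (0 : ℝ) 1 →
      IsPercolation d k p (qparam d p s k) (μ k)) :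
    (∀ k, 2 ≤ k → ∀ q' : ℝ, q' ∈ Set.Icc (0 : ℝ) 1 →
      ∀ ν : Measure (Config d), IsPercolation d k p q' ν →
      ∀ A ∈ typeSpace d k,
        (meanUpper d k ν A).toReal =
          (1 - p ^ (k - heightSet A)) *
            ((d : ℝ) ^ k * q' ^ A.ncard * p ^ heightSet A) / (1 - p * d)) ∧
    Tendsto
      (fun k : ℕ => (d : ℝ) ^ k * ((meanUpper d k (μ k) {([] : Vert d)}).toReal - 1))
      atTop (nhds (s / (1 - p * d))) ∧
    (∀ A : Set (Vert d), ([] : Vert d) ∈ A → A.encard = 2 →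
      Tendsto (fun k : ℕ => (d : ℝ) ^ k * (meanUpper d k (μ k) A).toReal)
        atTop (nhds ((1 - p * d) * p ^ heightSet A))) := by
  have hd2 : (2 : ℝ) ≤ (d : ℝ) := by exact_mod_cast hd
  have hd1 : (1 : ℝ) < (d : ℝ) := by linarith
  have hp1 : p < 1 := by nlinarith
  have hpd0 : 0 ≤ p * (d : ℝ) := by positivity
  have h1pd : 0 < 1 - p * (d : ℝ) := by linarith
  have part1 : ∀ k, 2 ≤ k → ∀ q' : ℝ, q' ∈ Set.Icc (0 : ℝ) 1 →
      ∀ ν : Measure (Config d), IsPercolation d k p q' ν →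
      ∀ A ∈ typeSpace d k,
        (meanUpper d k ν A).toReal =
          (1 - p ^ (k - heightSet A)) *
            ((d : ℝ) ^ k * q' ^ A.ncard * p ^ heightSet A) / (1 - p * d) :=
    fun k hk q' hq' ν hν A hA =>
      PercAux.meanUpper_toReal hk hp0 hp1.le hq'.1 hpd hν hA
  have hdk : Tendsto (fun k : ℕ => (d : ℝ) ^ k) atTop atTop :=
    tendsto_pow_atTop_atTop_of_one_lt hd1
  have hqev : ∀ᶠ k : ℕ in atTop, qparam d p s k ∈ Set.Icc (0 : ℝ) 1 := by
    filter_upwards [hdk.eventually_ge_atTop (|s| / (1 - p * d)),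
      hdk.eventually_ge_atTop (1 - p * d + |s|), hdk.eventually_ge_atTop 1]
      with k hk1 hk2 hk3
    have ht0 : (0 : ℝ) < (d : ℝ) ^ k := by positivity
    have habs1 : |s| ≤ (d : ℝ) ^ k * (1 - p * d) := (div_le_iff₀ h1pd).mp hk1
    have hs1 : -s ≤ |s| := neg_le_abs s
    have hs2 : s ≤ |s| := le_abs_self s
    have habs0 : 0 ≤ |s| := abs_nonneg s
    have hq_eq : qparam d p s k = ((1 - p * d) * (d : ℝ) ^ k + s) / ((d : ℝ) ^ k) ^ 2 := by
      rw [qparam, show 2 * k = k + k from two_mul k, pow_add]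
      field_simp
    rw [hq_eq]
    constructor
    · apply div_nonneg _ (by positivity)
      nlinarith
    · rw [div_le_one (by positivity)]
      nlinarith [mul_le_mul_of_nonneg_right hk2 ht0.le, mul_le_mul_of_nonneg_left hk3 habs0]
  have t2 : Tendsto (fun k : ℕ => p ^ k) atTop (nhds 0) :=
    tendsto_pow_atTop_nhds_zero_of_lt_one hp0 hp1
  refine ⟨part1, ?_, ?_⟩
  · -- part (ii)
    have hform : ∀ᶠ k : ℕ in atTop,
        (d : ℝ) ^ k * ((meanUpper d k (μ k) {([] : Vert d)}).toReal - 1)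
          = -((p * (d : ℝ)) ^ k) + (1 - p ^ k) * (s / (1 - p * d)) := by
      filter_upwards [hqev, eventually_ge_atTop 2] with k hq hk2
      rw [part1 k hk2 _ hq _ (hμ k hk2 hq) _ (PercAux.typeSpace_singleton_nil (by omega))]
      rw [PercAux.heightSet_singleton_nil, Set.ncard_singleton]
      have ht0 : ((d : ℝ) ^ k) ≠ 0 := by positivity
      rw [Nat.sub_zero, pow_zero, pow_one, mul_pow]
      simp only [qparam]
      rw [show 2 * k = k + k from two_mul k, pow_add]
      field_simp
      ring
    have hlim : Tendsto
        (fun k : ℕ => -((p * (d : ℝ)) ^ k) + (1 - p ^ k) * (s / (1 - p * d)))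
        atTop (nhds (s / (1 - p * d))) := by
      have t1 : Tendsto (fun k : ℕ => (p * (d : ℝ)) ^ k) atTop (nhds 0) :=
        tendsto_pow_atTop_nhds_zero_of_lt_one hpd0 hpd
      have := (t1.neg).add (((tendsto_const_nhds (x := (1:ℝ))).sub t2).mul_const (s / (1 - p * d)))
      simpa using this
    exact hlim.congr' (hform.mono fun k hk => hk.symm)
  · -- part (iii)
    intro A h0A hA2
    have hfin : A.Finite := Set.finite_of_encard_eq_coe (k := 2) (by exact_mod_cast hA2)
    have hnc : A.ncard = 2 := by
      obtain ⟨a, b, hab, rfl⟩ := Set.encard_eq_two.mp hA2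
      exact Set.ncard_pair hab
    have hform : ∀ᶠ k : ℕ in atTop,
        (d : ℝ) ^ k * (meanUpper d k (μ k) A).toReal
          = (1 - p ^ (k - heightSet A)) *
            (((1 - p * (d : ℝ)) + s / (d : ℝ) ^ k) ^ 2 * (p ^ heightSet A / (1 - p * d))) := by
      filter_upwards [hqev, eventually_ge_atTop 2, eventually_gt_atTop (heightSet A)]
        with k hq hk2 hkh
      rw [part1 k hk2 _ hq _ (hμ k hk2 hq) _
        (PercAux.mem_typeSpace_of_encard h0A hfin hkh), hnc]
      have ht0 : ((d : ℝ) ^ k) ≠ 0 := by positivity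
      simp only [qparam]
      rw [show 2 * k = k + k from two_mul k, pow_add]
      field_simp
    have ts : Tendsto (fun k : ℕ => s / (d : ℝ) ^ k) atTop (nhds 0) := by
      have h1 := hdk.inv_tendsto_atTop
      have h2 := h1.const_mul s
      simpa [div_eq_mul_inv, Pi.inv_apply] using h2
    have t2' : Tendsto (fun k : ℕ => p ^ (k - heightSet A)) atTop (nhds 0) :=
      t2.comp (Filter.tendsto_sub_atTop_nat (heightSet A))
    have hmain : Tendsto
        (fun k : ℕ => (1 - p ^ (k - heightSet A)) *
          (((1 - p * (d : ℝ)) + s / (d : ℝ) ^ k) ^ 2 * (p ^ heightSet A / (1 - p * d))))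
        atTop (nhds ((1 - (0:ℝ)) *
          (((1 - p * (d : ℝ)) + 0) ^ 2 * (p ^ heightSet A / (1 - p * d))))) :=
      ((tendsto_const_nhds (x := (1:ℝ))).sub t2').mul
        ((((tendsto_const_nhds (x := (1 - p * (d:ℝ)))).add ts).pow 2).mul_const _)
    have hval : (1 - (0:ℝ)) * (((1 - p * (d : ℝ)) + 0) ^ 2 *
        (p ^ heightSet A / (1 - p * d))) = (1 - p * d) * p ^ heightSet A := by
      field_simp
      ring
    rw [hval] at hmain
    exact hmain.congr' (hform.mono fun k hk => hk.symm)
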